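/- Let n, k be positive integers with k ≤ n-1, let p > k be prime, and let e = ν_p(n) > 0 (or e = ν_p(n-k) > 0). Let f(x) = ∑_{j=0}^{k} a_j c_j x^j where c_j = (-1)^{k-j} C(n,j) C(n-j-1,k-j) and each a_j is a nonzero integer all of whose prime factors are ≤ k. Then every irreducible factor of f over ℚ has degree divisible by k/gcd(k,e). -/

import Mathlib

open Polynomial Finset

section Aux

variable {p : ℕ} [hp : Fact p.Prime]

noncomputable def pG (p : ℕ) (r : ℝ) (g : ℚ[X]) : ℝ :=
  (range (g.natDegree + 1)).sup' nonempty_range_add_one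
    (fun j => (padicNorm p (g.coeff j) : ℝ) * r ^ j)

lemma pnR_nonneg (p : ℕ) (x : ℚ) : (0:ℝ) ≤ (padicNorm p x : ℝ) := by
  exact_mod_cast padicNorm.nonneg x

lemma pnR_pos {x : ℚ} (hx : x ≠ 0) : (0:ℝ) < (padicNorm p x : ℝ) := by
  have := padicNorm.nonzero (p := p) hx
  have h : 0 < padicNorm p x := lt_of_le_of_ne (padicNorm.nonneg _) (Ne.symm this)
  exact_mod_cast h

omit hp in
lemma pG_nonneg (r : ℝ) (hr : 0 < r) (g : ℚ[X]) : 0 ≤ pG p r g := by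
  refine le_trans ?_ (Finset.le_sup'
    (f := fun j => (padicNorm p (g.coeff j) : ℝ) * r ^ j)
    (mem_range.2 (Nat.lt_succ_of_le (le_refl g.natDegree))))
  exact mul_nonneg (pnR_nonneg p _) (pow_nonneg hr.le _)

omit hp in
lemma term_le_pG (r : ℝ) (hr : 0 < r) (g : ℚ[X]) (j : ℕ) :
    (padicNorm p (g.coeff j) : ℝ) * r ^ j ≤ pG p r g := by
  by_cases hj : g.coeff j = 0
  · rw [hj]; simpa using pG_nonneg (p := p) r hr g
  · exact Finset.le_sup' (f := fun j => (padicNorm p (g.coeff j) : ℝ) * r ^ j)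
      (mem_range.2 (Nat.lt_succ_of_le (le_natDegree_of_ne_zero hj)))

lemma pG_pos (r : ℝ) (hr : 0 < r) {g : ℚ[X]} (hg : g ≠ 0) : 0 < pG p r g := by
  have h1 : g.coeff g.natDegree ≠ 0 := leadingCoeff_ne_zero.2 hg
  have h2 : (0:ℝ) < (padicNorm p (g.coeff g.natDegree) : ℝ) * r ^ g.natDegree :=
    mul_pos (pnR_pos h1) (pow_pos hr _)
  exact lt_of_lt_of_le h2 (term_le_pG r hr g _)

lemma pG_mul_le (r : ℝ) (hr : 0 < r) {g h : ℚ[X]} (hg : g ≠ 0) (hh : h ≠ 0) :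
    pG p r g * pG p r h ≤ pG p r (g * h) := by
  classical
  obtain ⟨i0, hi0mem, hi0⟩ := Finset.exists_mem_eq_sup' (s := range (g.natDegree + 1))
    nonempty_range_add_one (fun j => (padicNorm p (g.coeff j) : ℝ) * r ^ j)
  obtain ⟨j0, hj0mem, hj0⟩ := Finset.exists_mem_eq_sup' (s := range (h.natDegree + 1))
    nonempty_range_add_one (fun j => (padicNorm p (h.coeff j) : ℝ) * r ^ j)
  set Sg := (range (g.natDegree + 1)).filter
    (fun j => (padicNorm p (g.coeff j) : ℝ) * r ^ j = pG p r g) with hSg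
  set Sh := (range (h.natDegree + 1)).filter
    (fun j => (padicNorm p (h.coeff j) : ℝ) * r ^ j = pG p r h) with hSh
  have hSgne : Sg.Nonempty := ⟨i0, Finset.mem_filter.2 ⟨hi0mem, hi0.symm⟩⟩
  have hShne : Sh.Nonempty := ⟨j0, Finset.mem_filter.2 ⟨hj0mem, hj0.symm⟩⟩
  set i := Sg.min' hSgne with hi
  set j := Sh.min' hShne with hj
  have hiS : i ∈ Sg := Sg.min'_mem hSgne
  have hjS : j ∈ Sh := Sh.min'_mem hShne
  have hieq : (padicNorm p (g.coeff i) : ℝ) * r ^ i = pG p r g := (Finset.mem_filter.1 hiS).2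
  have hjeq : (padicNorm p (h.coeff j) : ℝ) * r ^ j = pG p r h := (Finset.mem_filter.1 hjS).2
  have hile : i ≤ g.natDegree := Nat.lt_succ_iff.1 (mem_range.1 (Finset.mem_filter.1 hiS).1)
  have hjle : j ≤ h.natDegree := Nat.lt_succ_iff.1 (mem_range.1 (Finset.mem_filter.1 hjS).1)
  have hGg := pG_pos (p := p) r hr hg
  have hGh := pG_pos (p := p) r hr hh
  have hlt_g : ∀ a < i, (padicNorm p (g.coeff a) : ℝ) * r ^ a < pG p r g := by
    intro a ha
    have hmem : a ∈ range (g.natDegree + 1) := mem_range.2 (Nat.lt_succ_of_le (ha.le.trans hile))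
    have hne : (padicNorm p (g.coeff a) : ℝ) * r ^ a ≠ pG p r g := by
      intro heq
      exact absurd (Sg.min'_le a (Finset.mem_filter.2 ⟨hmem, heq⟩)) (not_le.2 ha)
    exact lt_of_le_of_ne (term_le_pG r hr g a) hne
  have hlt_h : ∀ b < j, (padicNorm p (h.coeff b) : ℝ) * r ^ b < pG p r h := by
    intro b hb
    have hmem : b ∈ range (h.natDegree + 1) := mem_range.2 (Nat.lt_succ_of_le (hb.le.trans hjle))
    have hne : (padicNorm p (h.coeff b) : ℝ) * r ^ b ≠ pG p r h := by
      intro heq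
      exact absurd (Sh.min'_le b (Finset.mem_filter.2 ⟨hmem, heq⟩)) (not_le.2 hb)
    exact lt_of_le_of_ne (term_le_pG r hr h b) hne
  have hmain : padicNorm p ((g * h).coeff (i + j)) = padicNorm p (g.coeff i * h.coeff j) := by
    rw [coeff_mul]
    have hmem : ((i, j) : ℕ × ℕ) ∈ Finset.HasAntidiagonal.antidiagonal (i + j) := by simp
    rw [← Finset.add_sum_erase _ _ hmem]
    rcases Finset.eq_empty_or_nonempty ((Finset.HasAntidiagonal.antidiagonal (i + j)).erase (i, j)) with he | hne
    · rw [he]; simp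
    · have hcross : ∀ q ∈ (Finset.HasAntidiagonal.antidiagonal (i + j)).erase (i, j),
          padicNorm p (g.coeff q.1 * h.coeff q.2) < padicNorm p (g.coeff i * h.coeff j) := by
        rintro ⟨a, b⟩ hq
        have hab : a + b = i + j := Finset.HasAntidiagonal.mem_antidiagonal.1 (Finset.mem_erase.1 hq).2
        have hne' : (a, b) ≠ ((i, j) : ℕ × ℕ) := (Finset.mem_erase.1 hq).1
        have hR : ((padicNorm p (g.coeff a * h.coeff b) : ℝ)) * r ^ (i + j)
            < ((padicNorm p (g.coeff i * h.coeff j) : ℝ)) * r ^ (i + j) := by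
          rw [padicNorm.mul, padicNorm.mul]
          push_cast
          have key : ((padicNorm p (g.coeff a) : ℝ) * r ^ a) * ((padicNorm p (h.coeff b) : ℝ) * r ^ b)
              < pG p r g * pG p r h := by
            have ta := term_le_pG (p := p) r hr g a
            have tb := term_le_pG (p := p) r hr h b
            have na : (0:ℝ) ≤ (padicNorm p (g.coeff a) : ℝ) * r ^ a :=
              mul_nonneg (pnR_nonneg p _) (pow_nonneg hr.le _)
            have nb : (0:ℝ) ≤ (padicNorm p (h.coeff b) : ℝ) * r ^ b :=
              mul_nonneg (pnR_nonneg p _) (pow_nonneg hr.le _)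
            rcases Nat.lt_trichotomy a i with hai | hai | hai
            · have sa := hlt_g a hai
              nlinarith
            · exfalso
              apply hne'
              subst hai
              have : b = j := by omega
              rw [this]
            · have hbj : b < j := by omega
              have sb := hlt_h b hbj
              nlinarith
          calc (padicNorm p (g.coeff a) : ℝ) * (padicNorm p (h.coeff b) : ℝ) * r ^ (i + j)
              = ((padicNorm p (g.coeff a) : ℝ) * r ^ a) * ((padicNorm p (h.coeff b) : ℝ) * r ^ b) := by
                rw [← hab, pow_add]; ring
            _ < pG p r g * pG p r h := key
            _ = ((padicNorm p (g.coeff i) : ℝ) * r ^ i) * ((padicNorm p (h.coeff j) : ℝ) * r ^ j) := by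
                rw [hieq, hjeq]
            _ = (padicNorm p (g.coeff i) : ℝ) * (padicNorm p (h.coeff j) : ℝ) * r ^ (i + j) := by
                rw [pow_add]; ring
        have := (mul_lt_mul_iff_left₀ (by positivity : (0:ℝ) < r ^ (i + j))).1 hR
        exact_mod_cast this
      have hsum := padicNorm.sum_lt (p := p) hne (fun q hq => hcross q hq)
      rw [add_comm (g.coeff i * h.coeff j)]
      rw [padicNorm.add_eq_max_of_ne (p := p) (ne_of_lt hsum)]
      exact max_eq_right hsum.le
  have hdeg : i + j ≤ (g * h).natDegree := by
    rw [natDegree_mul hg hh]; omega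
  calc pG p r g * pG p r h
      = ((padicNorm p (g.coeff i) : ℝ) * r ^ i) * ((padicNorm p (h.coeff j) : ℝ) * r ^ j) := by
        rw [hieq, hjeq]
    _ = (padicNorm p (g.coeff i * h.coeff j) : ℝ) * r ^ (i + j) := by
        rw [padicNorm.mul]; push_cast; rw [pow_add]; ring
    _ = (padicNorm p ((g * h).coeff (i + j)) : ℝ) * r ^ (i + j) := by rw [hmain]
    _ ≤ pG p r (g * h) := term_le_pG r hr _ _


lemma gauss_key (r : ℝ) (hr : 0 < r) {g h : ℚ[X]} (hg : g ≠ 0) (hh : h ≠ 0)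
    (h0 : (g * h).coeff 0 ≠ 0)
    (H1 : ∀ j, (padicNorm p ((g * h).coeff j) : ℝ) * r ^ j
      ≤ (padicNorm p ((g * h).coeff 0) : ℝ))
    (H2 : (padicNorm p ((g * h).coeff ((g * h).natDegree)) : ℝ) * r ^ ((g * h).natDegree)
      = (padicNorm p ((g * h).coeff 0) : ℝ)) :
    (padicNorm p (g.coeff 0) : ℝ)
      = (padicNorm p (g.coeff g.natDegree) : ℝ) * r ^ g.natDegree := by
  have hGf : pG p r (g * h) = (padicNorm p ((g * h).coeff 0) : ℝ) := by
    apply le_antisymm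
    · exact Finset.sup'_le _ _ (fun j _ => H1 j)
    · simpa using term_le_pG (p := p) r hr (g * h) 0
  have hg0 : g.coeff 0 ≠ 0 := fun hz => h0 (by rw [mul_coeff_zero, hz, zero_mul])
  have hh0 : h.coeff 0 ≠ 0 := fun hz => h0 (by rw [mul_coeff_zero, hz, mul_zero])
  have hglc : g.coeff g.natDegree ≠ 0 := leadingCoeff_ne_zero.2 hg
  have hhlc : h.coeff h.natDegree ≠ 0 := leadingCoeff_ne_zero.2 hh
  have hGg := pG_pos (p := p) r hr hg
  have hGh := pG_pos (p := p) r hr hh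
  have e1 : (padicNorm p (g.coeff 0) : ℝ) * (padicNorm p (h.coeff 0) : ℝ)
      = (padicNorm p ((g * h).coeff 0) : ℝ) := by
    rw [mul_coeff_zero, padicNorm.mul]; push_cast; ring
  have t1 : (padicNorm p (g.coeff 0) : ℝ) ≤ pG p r g := by
    simpa using term_le_pG (p := p) r hr g 0
  have t2 : (padicNorm p (h.coeff 0) : ℝ) ≤ pG p r h := by
    simpa using term_le_pG (p := p) r hr h 0
  have hprod : pG p r g * pG p r h = (padicNorm p ((g * h).coeff 0) : ℝ) := by
    apply le_antisymm
    · rw [← hGf]; exact pG_mul_le r hr hg hh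
    · rw [← e1]
      exact mul_le_mul t1 t2 (pnR_nonneg p _) (le_of_lt hGg)
  have hx := pnR_pos (p := p) hg0
  have hy := pnR_pos (p := p) hh0
  have hveq : (padicNorm p (g.coeff 0) : ℝ) = pG p r g := by
    rcases lt_or_eq_of_le t1 with hlt | heq
    · exfalso
      have : (padicNorm p (g.coeff 0) : ℝ) * (padicNorm p (h.coeff 0) : ℝ)
          < pG p r g * pG p r h := by nlinarith
      rw [e1, hprod] at this; exact lt_irrefl _ this
    · exact heq
  -- top coefficients
  have e2 : ((padicNorm p (g.coeff g.natDegree) : ℝ) * r ^ g.natDegree)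
      * ((padicNorm p (h.coeff h.natDegree) : ℝ) * r ^ h.natDegree)
      = (padicNorm p ((g * h).coeff ((g * h).natDegree)) : ℝ) * r ^ ((g * h).natDegree) := by
    rw [natDegree_mul hg hh, coeff_mul_degree_add_degree, padicNorm.mul, pow_add]
    simp only [leadingCoeff]
    push_cast; ring
  have t3 := term_le_pG (p := p) r hr g g.natDegree
  have t4 := term_le_pG (p := p) r hr h h.natDegree
  have hx3 : (0:ℝ) < (padicNorm p (g.coeff g.natDegree) : ℝ) * r ^ g.natDegree :=
    mul_pos (pnR_pos hglc) (pow_pos hr _)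
  have hy3 : (0:ℝ) < (padicNorm p (h.coeff h.natDegree) : ℝ) * r ^ h.natDegree :=
    mul_pos (pnR_pos hhlc) (pow_pos hr _)
  have hveq2 : (padicNorm p (g.coeff g.natDegree) : ℝ) * r ^ g.natDegree = pG p r g := by
    rcases lt_or_eq_of_le t3 with hlt | heq
    · exfalso
      have : ((padicNorm p (g.coeff g.natDegree) : ℝ) * r ^ g.natDegree)
          * ((padicNorm p (h.coeff h.natDegree) : ℝ) * r ^ h.natDegree)
          < pG p r g * pG p r h := by nlinarith
      rw [e2, H2, ← hprod] at this; exact lt_irrefl _ this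
    · exact heq
  rw [hveq, ← hveq2]


lemma endgame (k e : ℕ) (hk : 0 < k) (he : 0 < e) (s : ℝ)
    (hs : s * k = (e : ℝ) ∨ s * k = -(e : ℝ))
    {g : ℚ[X]} (hg0 : g.coeff 0 ≠ 0) (hglc : g.coeff g.natDegree ≠ 0)
    (hkey : (padicNorm p (g.coeff 0) : ℝ)
      = (padicNorm p (g.coeff g.natDegree) : ℝ) * ((p : ℝ) ^ s) ^ g.natDegree) :
    k / Nat.gcd k e ∣ g.natDegree := by
  set m := g.natDegree with hm
  have hp1 : (1:ℝ) < p := by exact_mod_cast hp.out.one_lt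
  have hp0 : (0:ℝ) < p := lt_trans one_pos hp1
  set u0 := padicValRat p (g.coeff 0) with hu0
  set u1 := padicValRat p (g.coeff m) with hu1
  have h1 : padicNorm p (g.coeff 0) = (p:ℚ) ^ (-u0) := padicNorm.eq_zpow_of_nonzero hg0
  have h2 : padicNorm p (g.coeff m) = (p:ℚ) ^ (-u1) := padicNorm.eq_zpow_of_nonzero hglc
  have c1 : ((padicNorm p (g.coeff 0) : ℚ) : ℝ) = (p:ℝ) ^ (((-u0 : ℤ)) : ℝ) := by
    rw [h1, Real.rpow_intCast]; push_cast; ring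
  have c2 : ((padicNorm p (g.coeff m) : ℚ) : ℝ) = (p:ℝ) ^ (((-u1 : ℤ)) : ℝ) := by
    rw [h2, Real.rpow_intCast]; push_cast; ring
  have crm : ((p:ℝ) ^ s) ^ m = (p:ℝ) ^ (s * (m:ℝ)) := by
    rw [Real.rpow_mul hp0.le, Real.rpow_natCast]
  have heq : (p:ℝ) ^ (((-u0 : ℤ)) : ℝ)
      = (p:ℝ) ^ ((((-u1 : ℤ)) : ℝ) + s * (m:ℝ)) := by
    rw [Real.rpow_add hp0, ← c1, ← c2, ← crm]; exact hkey
  have hexp : (((-u0 : ℤ)) : ℝ) = (((-u1 : ℤ)) : ℝ) + s * (m:ℝ) := by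
    apply le_antisymm
    · exact (Real.rpow_le_rpow_left_iff hp1).1 (le_of_eq heq)
    · exact (Real.rpow_le_rpow_left_iff hp1).1 (le_of_eq heq.symm)
  have hsm : s * (m:ℝ) = ((u1 - u0 : ℤ) : ℝ) := by push_cast at hexp ⊢; linarith
  -- multiply by k
  have hdvd : (k:ℤ) ∣ (e : ℤ) * (m : ℤ) := by
    rcases hs with hcase | hcase
    · refine ⟨u1 - u0, ?_⟩
      have h5 : (e:ℝ) * (m:ℝ) = ((u1 - u0 : ℤ) : ℝ) * (k:ℝ) := by
        rw [← hsm, ← hcase]; ring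
      have h6 : ((e * m : ℤ) : ℝ) = (((u1 - u0) * k : ℤ) : ℝ) := by push_cast at h5 ⊢; linarith
      have h7 : (e * m : ℤ) = (u1 - u0) * k := by exact_mod_cast h6
      rw [h7]; ring
    · refine ⟨u0 - u1, ?_⟩
      have h5 : -((e:ℝ)) * (m:ℝ) = ((u1 - u0 : ℤ) : ℝ) * (k:ℝ) := by
        rw [← hsm, ← hcase]; ring
      have h6 : ((e * m : ℤ) : ℝ) = (((u0 - u1) * k : ℤ) : ℝ) := by push_cast at h5 ⊢; linarith
      have h7 : (e * m : ℤ) = (u0 - u1) * k := by exact_mod_cast h6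
      rw [h7]; ring
  have hkem : k ∣ e * m := by exact_mod_cast hdvd
  -- now conclude
  set d := Nat.gcd k e with hd
  have hdpos : 0 < d := Nat.gcd_pos_of_pos_left e hk
  have hke : k = d * (k / d) := (Nat.div_mul_cancel (Nat.gcd_dvd_left k e)).symm.trans (mul_comm _ _)
  have hee : e = d * (e / d) := (Nat.div_mul_cancel (Nat.gcd_dvd_right k e)).symm.trans (mul_comm _ _)
  have h3 : d * (k / d) ∣ d * ((e / d) * m) := by
    rw [← hke, ← mul_assoc, ← hee]; exact hkem
  have h4 : k / d ∣ (e / d) * m := (mul_dvd_mul_iff_left (by exact_mod_cast hdpos.ne' : d ≠ 0)).1 h3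
  exact (Nat.coprime_div_gcd_div_gcd hdpos).dvd_of_dvd_mul_left h4


lemma padicValNat_prod_range' (f : ℕ → ℕ) (m : ℕ) (hf : ∀ i < m, f i ≠ 0) :
    padicValNat p (∏ i ∈ range m, f i) = ∑ i ∈ range m, padicValNat p (f i) := by
  induction m with
  | zero => simp
  | succ m ih =>
    rw [prod_range_succ, sum_range_succ,
      padicValNat.mul (Finset.prod_ne_zero_iff.2 (fun i hi => hf i
        (lt_trans (mem_range.1 hi) (Nat.lt_succ_self m)))) (hf m (Nat.lt_succ_self m)),
      ih (fun i hi => hf i (lt_trans hi (Nat.lt_succ_self m)))]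

lemma val_choose_eq_sum {N j : ℕ} (hjp : j < p) (hjN : j ≤ N) :
    padicValNat p (N.choose j) = ∑ i ∈ range j, padicValNat p (N - i) := by
  have h1 : N.descFactorial j = Nat.factorial j * N.choose j :=
    Nat.descFactorial_eq_factorial_mul_choose N j
  have h2 : N.descFactorial j = ∏ i ∈ range j, (N - i) :=
    Nat.descFactorial_eq_prod_range N j
  have hfac : padicValNat p (Nat.factorial j) = 0 :=
    padicValNat.eq_zero_of_not_dvd (fun hd =>
      absurd ((Nat.Prime.dvd_factorial hp.out).1 hd) (not_le.2 hjp))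
  have hcne : N.choose j ≠ 0 := (Nat.choose_pos hjN).ne'
  have hterm : ∀ i < j, N - i ≠ 0 := fun i hi => Nat.sub_ne_zero_of_lt (lt_of_lt_of_le hi hjN)
  have := padicValNat_prod_range' (p := p) (fun i => N - i) j hterm
  rw [← h2, h1, padicValNat.mul (Nat.factorial_ne_zero j) hcne, hfac, zero_add] at this
  exact this

lemma val_choose_case1 {n k j : ℕ} (hkp : k < p) (hn : k + 1 ≤ n) (hpn : p ∣ n)
    (hj1 : 1 ≤ j) (hjk : j ≤ k) : padicValNat p (n.choose j) = padicValNat p n := by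
  rw [val_choose_eq_sum (lt_of_le_of_lt hjk hkp) (by omega)]
  rw [Finset.sum_eq_single_of_mem 0 (mem_range.2 hj1) ?_]
  · simp
  · intro i hi hne
    have hik : i < j := mem_range.1 hi
    apply padicValNat.eq_zero_of_not_dvd
    intro hd
    have h1 : p ∣ n - (n - i) := Nat.dvd_sub hpn hd
    have h2 : n - (n - i) = i := by omega
    rw [h2] at h1
    have hpk := hp.out.two_le
    exact absurd (Nat.le_of_dvd (by omega) h1) (not_le.2 (by omega))

lemma val_choose2_case1 {n k j : ℕ} (hkp : k < p) (hn : k + 1 ≤ n) (hpn : p ∣ n)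
    (hjk : j ≤ k) : padicValNat p ((n - j - 1).choose (k - j)) = 0 := by
  rw [val_choose_eq_sum (by omega) (by omega)]
  apply Finset.sum_eq_zero
  intro i hi
  have hik : i < k - j := mem_range.1 hi
  apply padicValNat.eq_zero_of_not_dvd
  have hrw : n - j - 1 - i = n - (j + 1 + i) := by omega
  rw [hrw]
  intro hd
  have h1 : p ∣ n - (n - (j + 1 + i)) := Nat.dvd_sub hpn hd
  have h2 : n - (n - (j + 1 + i)) = j + 1 + i := by omega
  rw [h2] at h1
  exact absurd (Nat.le_of_dvd (by omega) h1) (not_le.2 (by omega))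

lemma val_choose_case2 {n k j : ℕ} (hkp : k < p) (hn : k + 1 ≤ n) (hpnk : p ∣ n - k)
    (hjk : j ≤ k) : padicValNat p (n.choose j) = 0 := by
  rw [val_choose_eq_sum (by omega) (by omega)]
  apply Finset.sum_eq_zero
  intro i hi
  have hij : i < j := mem_range.1 hi
  apply padicValNat.eq_zero_of_not_dvd
  intro hd
  have h1 : p ∣ (n - i) - (n - k) := Nat.dvd_sub hd hpnk
  have h2 : (n - i) - (n - k) = k - i := by omega
  rw [h2] at h1
  exact absurd (Nat.le_of_dvd (by omega) h1) (not_le.2 (by omega))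

lemma val_choose2_case2 {n k j : ℕ} (hkp : k < p) (hn : k + 1 ≤ n) (hpnk : p ∣ n - k)
    (hjk : j < k) :
    padicValNat p ((n - j - 1).choose (k - j)) = padicValNat p (n - k) := by
  rw [val_choose_eq_sum (by omega) (by omega)]
  rw [Finset.sum_eq_single_of_mem (k - j - 1) (mem_range.2 (by omega)) ?_]
  · congr 1
    omega
  · intro i hi hne
    have hik : i < k - j := mem_range.1 hi
    apply padicValNat.eq_zero_of_not_dvd
    have hrw : n - j - 1 - i = n - (j + 1 + i) := by omega
    rw [hrw]
    intro hd
    have h1 : p ∣ (n - (j + 1 + i)) - (n - k) := Nat.dvd_sub hd hpnk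
    have h2 : (n - (j + 1 + i)) - (n - k) = k - (j + 1 + i) := by omega
    rw [h2] at h1
    exact absurd (Nat.le_of_dvd (by omega) h1) (not_le.2 (by omega))

lemma padicNorm_nat_eq' {m : ℕ} (hm : m ≠ 0) :
    padicNorm p (m : ℚ) = (p : ℚ) ^ (-(padicValNat p m : ℤ)) := by
  rw [padicNorm.eq_zpow_of_nonzero (by exact_mod_cast hm)]
  congr 1
  rw [padicValRat.of_nat]

lemma padicNorm_coeff_prod (a : ℤ) (hpa : ¬ (p : ℤ) ∣ a) (t : ℕ) (c1 c2 : ℕ)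
    (hc1 : c1 ≠ 0) (hc2 : c2 ≠ 0) :
    padicNorm p ((a : ℚ) * ((-1 : ℚ) ^ t * c1 * c2))
      = (p : ℚ) ^ (-((padicValNat p c1 : ℤ) + (padicValNat p c2 : ℤ))) := by
  have hpQ : (p : ℚ) ≠ 0 := by exact_mod_cast hp.out.ne_zero
  have key : padicNorm p ((a : ℚ) * ((c1 : ℚ) * (c2 : ℚ)))
      = (p : ℚ) ^ (-((padicValNat p c1 : ℤ) + (padicValNat p c2 : ℤ))) := by
    rw [padicNorm.mul, padicNorm.mul, (padicNorm.int_eq_one_iff a).2 hpa, one_mul,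
      padicNorm_nat_eq' hc1, padicNorm_nat_eq' hc2, ← zpow_add₀ hpQ]
    congr 1
    ring
  rcases Nat.even_or_odd t with ht | ht
  · rw [show (a : ℚ) * ((-1 : ℚ) ^ t * c1 * c2)
        = (-1 : ℚ) ^ t * ((a : ℚ) * ((c1 : ℚ) * c2)) by ring, ht.neg_one_pow, one_mul, key]
  · rw [show (a : ℚ) * ((-1 : ℚ) ^ t * c1 * c2)
        = (-1 : ℚ) ^ t * ((a : ℚ) * ((c1 : ℚ) * c2)) by ring, ht.neg_one_pow,
      neg_one_mul, padicNorm.neg, key]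

lemma cast_zpow_rpow {p : ℕ} (hp0 : (0:ℝ) < p) (w : ℤ) :
    (((p : ℚ) ^ (-w) : ℚ) : ℝ) = (p : ℝ) ^ (((-w : ℤ)) : ℝ) := by
  rw [Real.rpow_intCast]; push_cast; ring

lemma term_eval {p : ℕ} (hp0 : (0:ℝ) < p) (w : ℤ) (s : ℝ) (j : ℕ) :
    (((p : ℚ) ^ (-w) : ℚ) : ℝ) * ((p : ℝ) ^ s) ^ j = (p : ℝ) ^ ((-w : ℝ) + s * j) := by
  have h1 : (((p : ℚ) ^ (-w) : ℚ) : ℝ) = (p : ℝ) ^ (((-w : ℤ)) : ℝ) := by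
    rw [Real.rpow_intCast]; push_cast; ring
  rw [h1, ← Real.rpow_natCast ((p:ℝ) ^ s) j, ← Real.rpow_mul hp0.le, ← Real.rpow_add hp0]
  congr 1
  push_cast
  ring


end Aux


open Polynomial Finset

open Polynomial in
theorem irreducible_factor_degree_dvd (n k : ℕ) (hk : 1 ≤ k) (hkn : k ≤ n - 1) (p e : ℕ)
    (hp : p.Prime) (hpk : k < p) (he : 0 < e)
    (hval : e = padicValNat p n ∨ e = padicValNat p (n - k)) (a : ℕ → ℤ)
    (ha0 : ∀ j ≤ k, a j ≠ 0) (ha : ∀ j ≤ k, ∀ q : ℕ, q.Prime → (q : ℤ) ∣ a j → q ≤ k) :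
    ∀ g : ℚ[X], Irreducible g →
      g ∣ (∑ j ∈ Finset.range (k + 1),
        C ((a j : ℚ) * ((-1 : ℚ) ^ (k - j) * (n.choose j : ℚ) *
          ((n - j - 1).choose (k - j) : ℚ))) * X ^ j) →
      k / Nat.gcd k e ∣ g.natDegree := by
  haveI : Fact p.Prime := ⟨hp⟩
  intro g hgirr hgdvd
  have hn : k + 1 ≤ n := by omega
  set q : ℕ → ℚ := fun j => (a j : ℚ) * ((-1 : ℚ) ^ (k - j) * (n.choose j : ℚ) *
    ((n - j - 1).choose (k - j) : ℚ)) with hqdef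
  have hgdvd' : g ∣ ∑ j ∈ Finset.range (k + 1), C (q j) * X ^ j := hgdvd
  set F : ℚ[X] := ∑ j ∈ Finset.range (k + 1), C (q j) * X ^ j with hFdef
  obtain ⟨h, hF⟩ := hgdvd'
  -- basic facts about F
  have hcoeff : ∀ i, F.coeff i = if i ≤ k then q i else 0 := by
    intro i
    rw [hFdef, finset_sum_coeff]
    simp only [coeff_C_mul, coeff_X_pow, mul_ite, mul_one, mul_zero]
    rw [Finset.sum_ite_eq (range (k + 1)) i q]
    simp [Nat.lt_succ_iff]
  have hq0 : ∀ j ≤ k, q j ≠ 0 := by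
    intro j hj
    have h1 : (n.choose j : ℚ) ≠ 0 := Nat.cast_ne_zero.2 (Nat.choose_pos (by omega)).ne'
    have h2 : ((n - j - 1).choose (k - j) : ℚ) ≠ 0 :=
      Nat.cast_ne_zero.2 (Nat.choose_pos (by omega)).ne'
    have h3 : (a j : ℚ) ≠ 0 := Int.cast_ne_zero.2 (ha0 j hj)
    have h4 : ((-1 : ℚ)) ^ (k - j) ≠ 0 := pow_ne_zero _ (by norm_num)
    simp only [hqdef]
    exact mul_ne_zero h3 (mul_ne_zero (mul_ne_zero h4 h1) h2)
  have hck : F.coeff k ≠ 0 := by rw [hcoeff k, if_pos le_rfl]; exact hq0 k le_rfl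
  have hFdeg : F.natDegree = k := by
    apply le_antisymm
    · exact natDegree_le_iff_coeff_eq_zero.2 (fun N hN => by rw [hcoeff N, if_neg (by omega)])
    · exact le_natDegree_of_ne_zero hck
  have hF0 : F ≠ 0 := fun hz => hck (by rw [hz]; simp)
  have hg : g ≠ 0 := hgirr.ne_zero
  have hh : h ≠ 0 := by rintro rfl; rw [mul_zero] at hF; exact hF0 hF
  have hpa : ∀ j ≤ k, ¬ (p : ℤ) ∣ a j :=
    fun j hj hd => absurd (ha j hj p hp hd) (not_le.2 hpk)
  have hp1R : (1:ℝ) < (p:ℝ) := by exact_mod_cast hp.one_lt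
  have hp0R : (0:ℝ) < (p:ℝ) := lt_trans one_pos hp1R
  have hkR : (0:ℝ) < (k:ℝ) := by exact_mod_cast hk
  -- common endgame
  have main : ∀ s : ℝ, (s * k = (e : ℝ) ∨ s * k = -(e : ℝ)) →
      (∀ j, (padicNorm p (F.coeff j) : ℝ) * ((p:ℝ) ^ s) ^ j
        ≤ (padicNorm p (F.coeff 0) : ℝ)) →
      ((padicNorm p (F.coeff F.natDegree) : ℝ) * ((p:ℝ) ^ s) ^ F.natDegree
        = (padicNorm p (F.coeff 0) : ℝ)) →
      k / Nat.gcd k e ∣ g.natDegree := by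
    intro s hs H1 H2
    have hr : (0:ℝ) < (p:ℝ) ^ s := Real.rpow_pos_of_pos hp0R s
    have h0 : F.coeff 0 ≠ 0 := by
      rw [hcoeff 0, if_pos (Nat.zero_le k)]; exact hq0 0 (Nat.zero_le k)
    rw [hF] at h0 H1 H2
    have hkey := gauss_key ((p:ℝ) ^ s) hr hg hh h0 H1 H2
    have hg0 : g.coeff 0 ≠ 0 := fun hz => h0 (by rw [mul_coeff_zero, hz, zero_mul])
    exact endgame k e hk he s hs hg0 (leadingCoeff_ne_zero.2 hg) hkey
  rcases hval with hcase | hcase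
  · -- e = v_p(n)
    have hpn : p ∣ n := by
      by_contra hnd
      rw [padicValNat.eq_zero_of_not_dvd hnd] at hcase
      omega
    have hnormA : padicNorm p (F.coeff 0) = (p : ℚ) ^ (-(0 : ℤ)) := by
      rw [hcoeff 0, if_pos (Nat.zero_le k)]
      simp only [hqdef]
      rw [padicNorm_coeff_prod (a 0) (hpa 0 (Nat.zero_le k)) (k - 0) _ _
        (Nat.choose_pos (by omega : (0:ℕ) ≤ n)).ne'
        (Nat.choose_pos (by omega : k - 0 ≤ n - 0 - 1)).ne']
      congr 1
      rw [val_choose2_case1 hpk hn hpn (Nat.zero_le k)]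
      simp [padicValNat.one]
    have hnormB : ∀ j, 1 ≤ j → j ≤ k → padicNorm p (F.coeff j) = (p : ℚ) ^ (-(e : ℤ)) := by
      intro j hj1 hjk
      rw [hcoeff j, if_pos hjk]
      simp only [hqdef]
      rw [padicNorm_coeff_prod (a j) (hpa j hjk) (k - j) _ _
        (Nat.choose_pos (by omega : j ≤ n)).ne'
        (Nat.choose_pos (by omega : k - j ≤ n - j - 1)).ne']
      congr 1
      rw [val_choose_case1 hpk hn hpn hj1 hjk, val_choose2_case1 hpk hn hpn hjk, ← hcase]
      omega
    set s : ℝ := (e : ℝ) / (k : ℝ) with hsdef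
    have hsk : s * k = (e : ℝ) := div_mul_cancel₀ _ hkR.ne'
    have hs0 : 0 ≤ s := div_nonneg (Nat.cast_nonneg e) (Nat.cast_nonneg k)
    apply main s (Or.inl hsk)
    · intro j
      rcases le_or_gt j k with hjk | hjk
      · rcases Nat.eq_zero_or_pos j with rfl | hj1
        · simp
        · rw [hnormA, hnormB j hj1 hjk, term_eval hp0R, cast_zpow_rpow hp0R]
          apply (Real.rpow_le_rpow_left_iff hp1R).2
          push_cast
          have hjR : (j:ℝ) ≤ (k:ℝ) := by exact_mod_cast hjk
          nlinarith
      · rw [hcoeff j, if_neg (by omega)]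
        simp only [padicNorm.zero, Rat.cast_zero, zero_mul]
        exact pnR_nonneg p _
    · rw [hFdeg, hnormA, hnormB k hk le_rfl, term_eval hp0R, cast_zpow_rpow hp0R]
      congr 1
      push_cast
      linarith
  · -- e = v_p(n - k)
    have hpn : p ∣ n - k := by
      by_contra hnd
      rw [padicValNat.eq_zero_of_not_dvd hnd] at hcase
      omega
    have hnormA : padicNorm p (F.coeff k) = (p : ℚ) ^ (-(0 : ℤ)) := by
      rw [hcoeff k, if_pos le_rfl]
      simp only [hqdef]
      rw [padicNorm_coeff_prod (a k) (hpa k le_rfl) (k - k) _ _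
        (Nat.choose_pos (by omega : k ≤ n)).ne'
        (Nat.choose_pos (by omega : k - k ≤ n - k - 1)).ne']
      congr 1
      rw [val_choose_case2 hpk hn hpn le_rfl]
      simp [Nat.sub_self, Nat.choose_zero_right, padicValNat.one]
    have hnormB : ∀ j, j < k → padicNorm p (F.coeff j) = (p : ℚ) ^ (-(e : ℤ)) := by
      intro j hjk
      rw [hcoeff j, if_pos (le_of_lt hjk)]
      simp only [hqdef]
      rw [padicNorm_coeff_prod (a j) (hpa j (le_of_lt hjk)) (k - j) _ _
        (Nat.choose_pos (by omega : j ≤ n)).ne'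
        (Nat.choose_pos (by omega : k - j ≤ n - j - 1)).ne']
      congr 1
      rw [val_choose_case2 hpk hn hpn (le_of_lt hjk), val_choose2_case2 hpk hn hpn hjk, ← hcase]
      omega
    set s : ℝ := -((e : ℝ) / (k : ℝ)) with hsdef
    have hsk : s * k = -(e : ℝ) := by
      rw [hsdef, neg_mul, div_mul_cancel₀ _ hkR.ne']
    have hs0 : s ≤ 0 :=
      neg_nonpos.2 (div_nonneg (Nat.cast_nonneg e) (Nat.cast_nonneg k))
    apply main s (Or.inr hsk)
    · intro j
      rcases lt_or_ge j k with hjk | hjk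
      · rw [hnormB j hjk, hnormB 0 (by omega), term_eval hp0R, cast_zpow_rpow hp0R]
        apply (Real.rpow_le_rpow_left_iff hp1R).2
        push_cast
        have hjR : (0:ℝ) ≤ (j:ℝ) := Nat.cast_nonneg j
        nlinarith
      · rcases eq_or_lt_of_le hjk with rfl | hjk'
        · rw [hnormA, hnormB 0 (by omega), term_eval hp0R, cast_zpow_rpow hp0R]
          apply (Real.rpow_le_rpow_left_iff hp1R).2
          push_cast
          linarith [hsk]
        · rw [hcoeff j, if_neg (by omega)]
          simp only [padicNorm.zero, Rat.cast_zero, zero_mul]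
          exact pnR_nonneg p _
    · rw [hFdeg, hnormA, hnormB 0 (by omega), term_eval hp0R, cast_zpow_rpow hp0R]
      congr 1
      push_cast
      linarith [hsk]
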